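/- arXiv:2404.07955 — 6 statements merged into one kernel-verified Lean document; each statement's English description precedes it below -/
import Mathlib

section
/- If a matrix E ∈ ℝ^{n₁×n₂} is α-sparse (at most α·n₁ nonzero entries in each column and at most α·n₂ nonzero entries in each row), then its operator norm satisfies ‖E‖₂ ≤ α·√(n₁·n₂)·‖E‖_∞, where ‖E‖_∞ denotes the maximum absolute value of the entries of E. -/
open Matrix Real

/-- Entrywise supremum norm `‖E‖_∞ = max_{i,j} |E i j|`. -/
noncomputable def entrySup {m n : ℕ} (E : Matrix (Fin m) (Fin n) ℝ) : ℝ :=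
  ⨆ i, ⨆ j, |E i j|

/-- A matrix is `α`-sparse: at most `α·m` nonzero entries per column
and at most `α·n` nonzero entries per row. -/
def IsAlphaSparse {m n : ℕ} (α : ℝ) (E : Matrix (Fin m) (Fin n) ℝ) : Prop :=
  (∀ j, ((Finset.univ.filter fun i => E i j ≠ 0).card : ℝ) ≤ α * m) ∧
  (∀ i, ((Finset.univ.filter fun j => E i j ≠ 0).card : ℝ) ≤ α * n)

/-- Spectral (operator) norm of a matrix, via the Euclidean spaces. -/
noncomputable def matSpectralNorm {m n : ℕ} (A : Matrix (Fin m) (Fin n) ℝ) : ℝ :=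
  ‖LinearMap.toContinuousLinearMap (Matrix.toEuclideanLin A)‖

/-- Frobenius norm. -/
noncomputable def frobNorm {m n : ℕ} (A : Matrix (Fin m) (Fin n) ℝ) : ℝ :=
  Real.sqrt (∑ i, ∑ j, (A i j) ^ 2)

/-- Euclidean norm of the `i`-th row of a matrix. -/
noncomputable def rowNorm {m n : ℕ} (A : Matrix (Fin m) (Fin n) ℝ) (i : Fin m) : ℝ :=
  Real.sqrt (∑ j, (A i j) ^ 2)

/-- `μ`-incoherence: every row has Euclidean norm at most `μ√r/√m`. -/
def IsIncoherent {m r : ℕ} (μ : ℝ) (U : Matrix (Fin m) (Fin r) ℝ) : Prop :=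
  ∀ i, rowNorm U i ≤ μ * Real.sqrt r / Real.sqrt m

theorem sparse_matrix_opNorm_bound {n₁ n₂ : ℕ} (α : ℝ)
    (E : Matrix (Fin n₁) (Fin n₂) ℝ) (hE : IsAlphaSparse α E) :
    matSpectralNorm E ≤ α * Real.sqrt (n₁ * n₂) * entrySup E := by
  set M := entrySup E with hMdef
  rcases Nat.eq_zero_or_pos n₁ with h1 | h1
  · subst h1
    have hle : matSpectralNorm E ≤ 0 := by
      apply ContinuousLinearMap.opNorm_le_bound _ le_rfl
      intro x
      have hx : (LinearMap.toContinuousLinearMap (Matrix.toEuclideanLin E)) x = 0 :=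
        Subsingleton.elim _ _
      simp [hx]
    refine hle.trans ?_
    simp [hMdef, entrySup]
  rcases Nat.eq_zero_or_pos n₂ with h2 | h2
  · subst h2
    have hle : matSpectralNorm E ≤ 0 := by
      apply ContinuousLinearMap.opNorm_le_bound _ le_rfl
      intro x
      have hx : x = 0 := Subsingleton.elim _ _
      simp [hx]
    refine hle.trans ?_
    simp
  -- main case
  have hn1 : (0:ℝ) < n₁ := by exact_mod_cast h1
  have hn2 : (0:ℝ) < n₂ := by exact_mod_cast h2
  have hα : 0 ≤ α := by
    have h := hE.1 ⟨0, h2⟩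
    have h0 : (0:ℝ) ≤ α * n₁ := le_trans (Nat.cast_nonneg _) h
    nlinarith
  have hM : ∀ i j, |E i j| ≤ M := by
    intro i j
    have ha : |E i j| ≤ ⨆ j, |E i j| :=
      le_ciSup (f := fun j => |E i j|) (Set.Finite.bddAbove (Set.finite_range _)) j
    have hb : (⨆ j, |E i j|) ≤ M :=
      le_ciSup (f := fun i => ⨆ j, |E i j|) (Set.Finite.bddAbove (Set.finite_range _)) i
    exact ha.trans hb
  have hM0 : 0 ≤ M := (abs_nonneg _).trans (hM ⟨0, h1⟩ ⟨0, h2⟩)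
  have hC : 0 ≤ α * Real.sqrt (n₁ * n₂) * M := by positivity
  apply ContinuousLinearMap.opNorm_le_bound _ hC
  intro x
  set C := α * Real.sqrt (↑n₁ * ↑n₂) * M with hCdef
  -- row and column sum bounds
  have row : ∀ i, ∑ j, |E i j| ≤ α * n₂ * M := by
    intro i
    calc ∑ j, |E i j| = ∑ j ∈ Finset.univ.filter (fun j => E i j ≠ 0), |E i j| := by
          refine (Finset.sum_filter_of_ne ?_).symm
          intro j _ hj h0
          exact hj (by simpa using h0)
      _ ≤ (Finset.univ.filter (fun j => E i j ≠ 0)).card • M :=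
          Finset.sum_le_card_nsmul _ _ M (fun j _ => hM i j)
      _ = ((Finset.univ.filter (fun j => E i j ≠ 0)).card : ℝ) * M := by
          rw [nsmul_eq_mul]
      _ ≤ α * n₂ * M := mul_le_mul_of_nonneg_right (hE.2 i) hM0
  have col : ∀ j, ∑ i, |E i j| ≤ α * n₁ * M := by
    intro j
    calc ∑ i, |E i j| = ∑ i ∈ Finset.univ.filter (fun i => E i j ≠ 0), |E i j| := by
          refine (Finset.sum_filter_of_ne ?_).symm
          intro i _ hi h0
          exact hi (by simpa using h0)
      _ ≤ (Finset.univ.filter (fun i => E i j ≠ 0)).card • M :=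
          Finset.sum_le_card_nsmul _ _ M (fun i _ => hM i j)
      _ = ((Finset.univ.filter (fun i => E i j ≠ 0)).card : ℝ) * M := by
          rw [nsmul_eq_mul]
      _ ≤ α * n₁ * M := mul_le_mul_of_nonneg_right (hE.1 j) hM0
  -- per-row Cauchy-Schwarz
  have step : ∀ i, (∑ j, E i j * x j) ^ 2 ≤ (α * n₂ * M) * ∑ j, |E i j| * (x j) ^ 2 := by
    intro i
    have cs : (∑ j, |E i j * x j|) ^ 2 ≤ (∑ j, |E i j|) * ∑ j, |E i j| * (x j) ^ 2 :=
      Finset.sum_sq_le_sum_mul_sum_of_sq_eq_mul _ (fun j _ => abs_nonneg _)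
        (fun j _ => mul_nonneg (abs_nonneg _) (sq_nonneg _))
        (fun j _ => by rw [abs_mul, mul_pow, sq_abs (x j)]; ring)
    have habs : (∑ j, E i j * x j) ^ 2 ≤ (∑ j, |E i j * x j|) ^ 2 := by
      rw [← sq_abs (∑ j, E i j * x j)]
      exact pow_le_pow_left₀ (abs_nonneg _) (Finset.abs_sum_le_sum_abs _ _) 2
    have hsum : (∑ j, |E i j|) * (∑ j, |E i j| * (x j) ^ 2)
        ≤ (α * n₂ * M) * ∑ j, |E i j| * (x j) ^ 2 :=
      mul_le_mul_of_nonneg_right (row i)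
        (Finset.sum_nonneg fun j _ => mul_nonneg (abs_nonneg _) (sq_nonneg _))
    exact habs.trans (cs.trans hsum)
  -- total bound
  have key : ∑ i, (E.mulVec (fun j => x j) i) ^ 2 ≤ C ^ 2 * ∑ j, (x j) ^ 2 := by
    have hCsq : C ^ 2 = (α * n₂ * M) * (α * n₁ * M) := by
      have hs : (Real.sqrt (↑n₁ * ↑n₂)) ^ 2 = (↑n₁ * ↑n₂ : ℝ) :=
        Real.sq_sqrt (by positivity)
      rw [hCdef, mul_pow, mul_pow, hs]; ring
    calc ∑ i, (E.mulVec (fun j => x j) i) ^ 2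
        = ∑ i, (∑ j, E i j * x j) ^ 2 := by
          simp [Matrix.mulVec, dotProduct]
      _ ≤ ∑ i, (α * n₂ * M) * ∑ j, |E i j| * (x j) ^ 2 :=
          Finset.sum_le_sum fun i _ => step i
      _ = (α * n₂ * M) * ∑ j, (∑ i, |E i j|) * (x j) ^ 2 := by
          rw [← Finset.mul_sum, Finset.sum_comm]
          simp_rw [Finset.sum_mul]
      _ ≤ (α * n₂ * M) * ∑ j, (α * n₁ * M) * (x j) ^ 2 := by
          apply mul_le_mul_of_nonneg_left _ (by positivity)
          exact Finset.sum_le_sum fun j _ =>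
            mul_le_mul_of_nonneg_right (col j) (sq_nonneg _)
      _ = C ^ 2 * ∑ j, (x j) ^ 2 := by rw [hCsq, ← Finset.mul_sum]; ring
  -- conclude
  have hfx : ‖(LinearMap.toContinuousLinearMap (Matrix.toEuclideanLin E)) x‖
      = Real.sqrt (∑ i, (E.mulVec (fun j => x j) i) ^ 2) := by
    rw [EuclideanSpace.norm_eq]
    congr 1
    refine Finset.sum_congr rfl fun i _ => ?_
    rw [LinearMap.coe_toContinuousLinearMap', Matrix.toEuclideanLin_apply]
    simp [Real.norm_eq_abs, sq_abs]
  have hxn : ‖x‖ = Real.sqrt (∑ j, (x j) ^ 2) := by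
    rw [EuclideanSpace.norm_eq]
    congr 1
    exact Finset.sum_congr rfl fun j _ => by rw [Real.norm_eq_abs, sq_abs]
  rw [hfx, hxn]
  calc Real.sqrt (∑ i, (E.mulVec (fun j => x j) i) ^ 2)
      ≤ Real.sqrt (C ^ 2 * ∑ j, (x j) ^ 2) := Real.sqrt_le_sqrt key
    _ = C * Real.sqrt (∑ j, (x j) ^ 2) := by
        rw [Real.sqrt_mul (sq_nonneg C), Real.sqrt_sq hC]
end

section
/- Let E ∈ ℝ^{n₁×n₂} be α-sparse. Then for every row index j, the double sum Σ_{h₁,h₂} (EEᵀ)_{j,h₁}·(EEᵀ)_{j,h₂} is at most (α·√(n₁n₂)·‖E‖_∞)⁴, where the sum is over the absolute values of entries (each factor (EEᵀ)_{j,h} replaced by its absolute value). -/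
open Matrix Real

theorem sparse_double_sum_bound {n₁ n₂ : ℕ} (α : ℝ)
    (E : Matrix (Fin n₁) (Fin n₂) ℝ) (hE : IsAlphaSparse α E) (j : Fin n₁) :
    ∑ h₁, ∑ h₂, |(E * Eᵀ) j h₁| * |(E * Eᵀ) j h₂| ≤
      (α * Real.sqrt (n₁ * n₂) * entrySup E) ^ 4 := by
  by_cases h2 : Nonempty (Fin n₂)
  case neg =>
    have : IsEmpty (Fin n₂) := not_nonempty_iff.mp h2
    simp only [Matrix.mul_apply, Finset.univ_eq_empty, Finset.sum_empty, abs_zero,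
      mul_zero, zero_mul, Finset.sum_const_zero]
    exact Even.pow_nonneg (⟨2, by norm_num⟩ : Even 4) (α * Real.sqrt (↑n₁ * ↑n₂) * entrySup E)
  case pos =>
    obtain ⟨g₀⟩ := h2
    set M := entrySup E with hMdef
    have hM0 : 0 ≤ M := Real.iSup_nonneg fun i => Real.iSup_nonneg fun g => abs_nonneg _
    have hM : ∀ i g, |E i g| ≤ M := by
      intro i g
      refine le_trans (le_ciSup (f := fun g => |E i g|) (Finite.bddAbove_range _) g) ?_
      exact le_ciSup (f := fun i => ⨆ g, |E i g|) (Finite.bddAbove_range _) i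
    have hα1 : 0 ≤ α * n₁ := le_trans (Nat.cast_nonneg _) (hE.1 g₀)
    have hα2 : 0 ≤ α * n₂ := le_trans (Nat.cast_nonneg _) (hE.2 j)
    have hcol : ∀ g, ∑ h, |E h g| ≤ α * n₁ * M := by
      intro g
      have h1 : ∑ h, |E h g| = ∑ h ∈ Finset.univ.filter (fun h => E h g ≠ 0), |E h g| := by
        refine (Finset.sum_filter_of_ne ?_).symm
        intro h _ hne h0
        exact hne (by simp [h0])
      rw [h1]
      calc ∑ h ∈ Finset.univ.filter (fun h => E h g ≠ 0), |E h g|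
          ≤ ((Finset.univ.filter (fun h => E h g ≠ 0)).card : ℝ) * M := by
            rw [← nsmul_eq_mul]
            exact Finset.sum_le_card_nsmul _ _ _ fun h _ => hM h g
        _ ≤ α * n₁ * M := mul_le_mul_of_nonneg_right (hE.1 g) hM0
    have hrow : ∑ g, |E j g| ≤ α * n₂ * M := by
      have h1 : ∑ g, |E j g| = ∑ g ∈ Finset.univ.filter (fun g => E j g ≠ 0), |E j g| := by
        refine (Finset.sum_filter_of_ne ?_).symm
        intro g _ hne h0
        exact hne (by simp [h0])
      rw [h1]
      calc ∑ g ∈ Finset.univ.filter (fun g => E j g ≠ 0), |E j g|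
          ≤ ((Finset.univ.filter (fun g => E j g ≠ 0)).card : ℝ) * M := by
            rw [← nsmul_eq_mul]
            exact Finset.sum_le_card_nsmul _ _ _ fun g _ => hM j g
        _ ≤ α * n₂ * M := mul_le_mul_of_nonneg_right (hE.2 j) hM0
    have hS : ∑ h, |(E * Eᵀ) j h| ≤ (α * n₂ * M) * (α * n₁ * M) := by
      calc ∑ h, |(E * Eᵀ) j h| ≤ ∑ h, ∑ g, |E j g| * |E h g| := by
            refine Finset.sum_le_sum fun h _ => ?_
            rw [Matrix.mul_apply]
            refine le_trans (Finset.abs_sum_le_sum_abs _ _) ?_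
            refine Finset.sum_le_sum fun g _ => ?_
            rw [Matrix.transpose_apply, abs_mul]
        _ = ∑ g, |E j g| * ∑ h, |E h g| := by
            rw [Finset.sum_comm]
            simp [Finset.mul_sum]
        _ ≤ ∑ g, |E j g| * (α * n₁ * M) := by
            refine Finset.sum_le_sum fun g _ => ?_
            exact mul_le_mul_of_nonneg_left (hcol g) (abs_nonneg _)
        _ = (∑ g, |E j g|) * (α * n₁ * M) := by rw [Finset.sum_mul]
        _ ≤ (α * n₂ * M) * (α * n₁ * M) :=
            mul_le_mul_of_nonneg_right hrow (mul_nonneg hα1 hM0)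
    have hS0 : 0 ≤ ∑ h, |(E * Eᵀ) j h| := Finset.sum_nonneg fun h _ => abs_nonneg _
    have hsq : Real.sqrt (n₁ * n₂) ^ 2 = (n₁ : ℝ) * n₂ := by
      exact Real.sq_sqrt (by positivity)
    have key : (∑ h, |(E * Eᵀ) j h|) * (∑ h, |(E * Eᵀ) j h|) ≤
        ((α * n₂ * M) * (α * n₁ * M)) * ((α * n₂ * M) * (α * n₁ * M)) :=
      mul_le_mul hS hS hS0 (mul_nonneg (mul_nonneg hα2 hM0) (mul_nonneg hα1 hM0))
    calc ∑ h₁, ∑ h₂, |(E * Eᵀ) j h₁| * |(E * Eᵀ) j h₂|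
        = (∑ h, |(E * Eᵀ) j h|) * (∑ h, |(E * Eᵀ) j h|) := by
          rw [Finset.sum_mul_sum]
      _ ≤ ((α * n₂ * M) * (α * n₁ * M)) * ((α * n₂ * M) * (α * n₁ * M)) := key
      _ = (α * Real.sqrt (n₁ * n₂) * M) ^ 4 := by
          have : (α * Real.sqrt (n₁ * n₂) * M) ^ 4
              = α ^ 4 * (Real.sqrt (n₁ * n₂) ^ 2) ^ 2 * M ^ 4 := by ring
          rw [this, hsq]; ring
end

section
/- Let E ∈ ℝ^{n₁×n₂} be α-sparse and let U ∈ ℝ^{n₁×r} be μ-incoherent. Then for every nonnegative integer p and every row index j, ‖e_jᵀ(EEᵀ)ᵖU‖₂ ≤ √(μ²r/n₁)·(α·√(n₁n₂)·‖E‖_∞)^{2p}. -/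
open Matrix Real

/-! ### Auxiliary lemmas -/

lemma rowNorm_eq_norm {m n : ℕ} (A : Matrix (Fin m) (Fin n) ℝ) (i : Fin m) :
    rowNorm A i = ‖((WithLp.equiv 2 (Fin n → ℝ)).symm (A i))‖ := by
  rw [EuclideanSpace.norm_eq, rowNorm]
  congr 1
  refine Finset.sum_congr rfl fun k _ => by rw [Real.norm_eq_abs, sq_abs]; rfl

lemma rowNorm_mul_le {m n r : ℕ} (A : Matrix (Fin m) (Fin n) ℝ)
    (U : Matrix (Fin n) (Fin r) ℝ) (j : Fin m) :
    rowNorm (A * U) j ≤ ∑ l, |A j l| * rowNorm U l := by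
  rw [rowNorm_eq_norm]
  have h2 : (A * U) j = ∑ l, A j l • U l := by
    ext k; simp [Matrix.mul_apply, Finset.sum_apply]
  have h : (WithLp.equiv 2 (Fin r → ℝ)).symm ((A * U) j)
      = ∑ l, A j l • (WithLp.equiv 2 (Fin r → ℝ)).symm (U l) := by
    have : ((WithLp.equiv 2 (Fin r → ℝ)).symm : (Fin r → ℝ) → _)
        = ((WithLp.linearEquiv 2 ℝ (Fin r → ℝ)).symm : (Fin r → ℝ) →ₗ[ℝ] _) := rfl
    rw [this, h2, map_sum]
    simp
  rw [h]
  refine (norm_sum_le _ _).trans ?_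
  refine Finset.sum_le_sum fun l _ => ?_
  rw [norm_smul, Real.norm_eq_abs, rowNorm_eq_norm]

lemma entrySup_nonneg {m n : ℕ} (E : Matrix (Fin m) (Fin n) ℝ) : 0 ≤ entrySup E :=
  Real.iSup_nonneg fun _ => Real.iSup_nonneg fun _ => abs_nonneg _

lemma abs_le_entrySup {m n : ℕ} (E : Matrix (Fin m) (Fin n) ℝ) (i : Fin m) (k : Fin n) :
    |E i k| ≤ entrySup E := by
  refine le_trans (le_ciSup (f := fun k => |E i k|) (Set.Finite.bddAbove (Set.finite_range _)) k) ?_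
  exact le_ciSup (f := fun i => ⨆ j, |E i j|) (Set.Finite.bddAbove (Set.finite_range _)) i

/-- ℓ1 norm of a row is at most (number of nonzeros) * sup. -/
lemma row_l1_le {m n : ℕ} (E : Matrix (Fin m) (Fin n) ℝ) (i : Fin m) :
    ∑ k, |E i k| ≤ ((Finset.univ.filter fun k => E i k ≠ 0).card : ℝ) * entrySup E := by
  classical
  rw [← Finset.sum_filter_ne_zero (f := fun k => |E i k|)]
  have : (Finset.univ.filter fun k => |E i k| ≠ 0) = (Finset.univ.filter fun k => E i k ≠ 0) := by
    simp [abs_ne_zero]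
  rw [this]
  calc ∑ k ∈ Finset.univ.filter fun k => E i k ≠ 0, |E i k|
      ≤ ∑ _k ∈ Finset.univ.filter fun k => E i k ≠ 0, entrySup E :=
        Finset.sum_le_sum fun k _ => abs_le_entrySup E i k
    _ = _ := by rw [Finset.sum_const, nsmul_eq_mul]

lemma col_l1_le {m n : ℕ} (E : Matrix (Fin m) (Fin n) ℝ) (k : Fin n) :
    ∑ i, |E i k| ≤ ((Finset.univ.filter fun i => E i k ≠ 0).card : ℝ) * entrySup E := by
  classical
  rw [← Finset.sum_filter_ne_zero (f := fun i => |E i k|)]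
  have : (Finset.univ.filter fun i => |E i k| ≠ 0) = (Finset.univ.filter fun i => E i k ≠ 0) := by
    simp [abs_ne_zero]
  rw [this]
  calc ∑ i ∈ Finset.univ.filter fun i => E i k ≠ 0, |E i k|
      ≤ ∑ _i ∈ Finset.univ.filter fun i => E i k ≠ 0, entrySup E :=
        Finset.sum_le_sum fun i _ => abs_le_entrySup E i k
    _ = _ := by rw [Finset.sum_const, nsmul_eq_mul]

lemma row_l1_pow_le {n₁ n₂ : ℕ} (α : ℝ) (E : Matrix (Fin n₁) (Fin n₂) ℝ)
    (hE : IsAlphaSparse α E) (hC : 0 ≤ α * n₁ * entrySup E) (hD : 0 ≤ α * n₂ * entrySup E)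
    (p : ℕ) (j : Fin n₁) :
    ∑ k, |((E * Eᵀ) ^ p) j k| ≤ ((α * n₁ * entrySup E) * (α * n₂ * entrySup E)) ^ p := by
  classical
  have hs := entrySup_nonneg E
  have hrow : ∀ i, ∑ k, |E i k| ≤ α * n₂ * entrySup E := fun i =>
    (row_l1_le E i).trans (mul_le_mul_of_nonneg_right (hE.2 i) hs)
  have hcol : ∀ k, ∑ i, |E i k| ≤ α * n₁ * entrySup E := fun k =>
    (col_l1_le E k).trans (mul_le_mul_of_nonneg_right (hE.1 k) hs)
  induction p with
  | zero => simp [Matrix.one_apply, apply_ite abs]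
  | succ p ih =>
    have key : ∀ l, ∑ k, |(E * Eᵀ) l k| ≤ (α * n₁ * entrySup E) * (α * n₂ * entrySup E) := by
      intro l
      calc ∑ k, |(E * Eᵀ) l k| ≤ ∑ k, ∑ m, |E l m| * |E k m| := by
            refine Finset.sum_le_sum fun k _ => ?_
            rw [Matrix.mul_apply]
            refine (Finset.abs_sum_le_sum_abs _ _).trans ?_
            exact Finset.sum_le_sum fun m _ => by rw [abs_mul]; rfl
        _ = ∑ m, |E l m| * ∑ k, |E k m| := by
            rw [Finset.sum_comm]
            exact Finset.sum_congr rfl fun m _ => by rw [Finset.mul_sum]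
        _ ≤ ∑ m, |E l m| * (α * n₁ * entrySup E) :=
            Finset.sum_le_sum fun m _ =>
              mul_le_mul_of_nonneg_left (hcol m) (abs_nonneg _)
        _ = (∑ m, |E l m|) * (α * n₁ * entrySup E) := by rw [Finset.sum_mul]
        _ ≤ (α * n₂ * entrySup E) * (α * n₁ * entrySup E) := by
            refine mul_le_mul_of_nonneg_right (hrow l) hC
        _ = (α * n₁ * entrySup E) * (α * n₂ * entrySup E) := by ring
    calc ∑ k, |((E * Eᵀ) ^ (p + 1)) j k|
        = ∑ k, |∑ l, ((E * Eᵀ) ^ p) j l * (E * Eᵀ) l k| := by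
          simp [pow_succ, Matrix.mul_apply]
      _ ≤ ∑ k, ∑ l, |((E * Eᵀ) ^ p) j l| * |(E * Eᵀ) l k| := by
          refine Finset.sum_le_sum fun k _ => ?_
          refine (Finset.abs_sum_le_sum_abs _ _).trans ?_
          exact Finset.sum_le_sum fun l _ => by rw [abs_mul]
      _ = ∑ l, |((E * Eᵀ) ^ p) j l| * ∑ k, |(E * Eᵀ) l k| := by
          rw [Finset.sum_comm]
          exact Finset.sum_congr rfl fun l _ => by rw [Finset.mul_sum]
      _ ≤ ∑ l, |((E * Eᵀ) ^ p) j l| * ((α * n₁ * entrySup E) * (α * n₂ * entrySup E)) :=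
          Finset.sum_le_sum fun l _ => mul_le_mul_of_nonneg_left (key l) (abs_nonneg _)
      _ = (∑ l, |((E * Eᵀ) ^ p) j l|) * ((α * n₁ * entrySup E) * (α * n₂ * entrySup E)) := by
          rw [Finset.sum_mul]
      _ ≤ _ := by
          rw [pow_succ]
          exact mul_le_mul_of_nonneg_right ih (mul_nonneg hC hD)

lemma incoherence_le_sqrt (n₁ r : ℕ) (μ : ℝ) :
    μ * Real.sqrt r / Real.sqrt n₁ ≤ Real.sqrt (μ ^ 2 * r / n₁) := by
  rw [Real.sqrt_div (by positivity), Real.sqrt_mul (sq_nonneg μ), Real.sqrt_sq_eq_abs]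
  have h : μ * Real.sqrt r ≤ |μ| * Real.sqrt r :=
    mul_le_mul_of_nonneg_right (le_abs_self μ) (Real.sqrt_nonneg _)
  exact div_le_div_of_nonneg_right h (Real.sqrt_nonneg _)

theorem row_norm_pow_incoherent_bound {n₁ n₂ r : ℕ} (α μ : ℝ)
    (E : Matrix (Fin n₁) (Fin n₂) ℝ) (U : Matrix (Fin n₁) (Fin r) ℝ)
    (hE : IsAlphaSparse α E) (hU : IsIncoherent μ U) (p : ℕ) (j : Fin n₁) :
    rowNorm ((E * Eᵀ) ^ p * U) j ≤
      Real.sqrt (μ ^ 2 * r / n₁) * (α * Real.sqrt (n₁ * n₂) * entrySup E) ^ (2 * p) := by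
  classical
  have hK := incoherence_le_sqrt n₁ r μ
  by_cases hn2 : n₂ = 0
  · subst hn2
    have hEE : E * Eᵀ = 0 := by ext i k; simp [Matrix.mul_apply]
    cases p with
    | zero =>
      simp only [pow_zero, Matrix.one_mul, Nat.mul_zero, mul_one]
      exact (hU j).trans hK
    | succ q =>
      rw [hEE, zero_pow (Nat.succ_ne_zero q), Matrix.zero_mul]
      have h0 : rowNorm (0 : Matrix (Fin n₁) (Fin r) ℝ) j = 0 := by
        simp [rowNorm]
      rw [h0, show ((n₁ : ℝ) * ((0 : ℕ) : ℝ)) = 0 by norm_num, Real.sqrt_zero, mul_zero,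
        zero_mul, zero_pow (by omega : 2 * (q + 1) ≠ 0), mul_zero]
  · have hn2' : 0 < n₂ := Nat.pos_of_ne_zero hn2
    have hn1 : 0 < n₁ := j.pos
    have hn1R : (0:ℝ) < n₁ := by exact_mod_cast hn1
    have hα : 0 ≤ α := by
      have h := hE.1 ⟨0, hn2'⟩
      have h2 : (0:ℝ) ≤ α * n₁ := le_trans (Nat.cast_nonneg _) h
      nlinarith
    have hs := entrySup_nonneg E
    have hC : 0 ≤ α * n₁ * entrySup E := by positivity
    have hD : 0 ≤ α * n₂ * entrySup E := by positivity
    have hl1 := row_l1_pow_le α E hE hC hD p j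
    have hKnn : 0 ≤ μ * Real.sqrt r / Real.sqrt n₁ :=
      le_trans (Real.sqrt_nonneg _) (hU j)
    have hbase : (α * Real.sqrt ((n₁ : ℝ) * n₂) * entrySup E) ^ 2
        = (α * n₁ * entrySup E) * (α * n₂ * entrySup E) := by
      rw [mul_pow, mul_pow, Real.sq_sqrt (by positivity)]
      ring
    calc rowNorm ((E * Eᵀ) ^ p * U) j
        ≤ ∑ l, |((E * Eᵀ) ^ p) j l| * rowNorm U l := rowNorm_mul_le _ _ j
      _ ≤ ∑ l, |((E * Eᵀ) ^ p) j l| * (μ * Real.sqrt r / Real.sqrt n₁) :=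
          Finset.sum_le_sum fun l _ => mul_le_mul_of_nonneg_left (hU l) (abs_nonneg _)
      _ = (∑ l, |((E * Eᵀ) ^ p) j l|) * (μ * Real.sqrt r / Real.sqrt n₁) :=
          (Finset.sum_mul _ _ _).symm
      _ ≤ ((α * n₁ * entrySup E) * (α * n₂ * entrySup E)) ^ p
            * (μ * Real.sqrt r / Real.sqrt n₁) :=
          mul_le_mul_of_nonneg_right hl1 hKnn
      _ ≤ ((α * n₁ * entrySup E) * (α * n₂ * entrySup E)) ^ p
            * Real.sqrt (μ ^ 2 * r / n₁) :=
          mul_le_mul_of_nonneg_left hK (pow_nonneg (mul_nonneg hC hD) p)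
      _ = Real.sqrt (μ ^ 2 * r / n₁) * (α * Real.sqrt (n₁ * n₂) * entrySup E) ^ (2 * p) := by
          rw [pow_mul, hbase, mul_comm]
end

section
/- Let E ∈ ℝ^{n₁×n₂} be α-sparse and let V ∈ ℝ^{n₂×r} be μ-incoherent (with respect to n₂). Then for every nonnegative integer p and every row index j, ‖e_jᵀ(EEᵀ)ᵖ E V‖₂ ≤ √(μ²r/n₁)·(α·√(n₁n₂)·‖E‖_∞)^{2p+1}. -/
open Matrix Real

lemma rowNorm0 {m n : ℕ} (A : Matrix (Fin m) (Fin n) ℝ) (i : Fin m) :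
    Real.sqrt (∑ j, (A i j) ^ 2) = ‖(WithLp.equiv 2 (Fin n → ℝ)).symm (A i)‖ := by
  rw [EuclideanSpace.norm_eq]
  congr 1
  refine Finset.sum_congr rfl fun l _ => ?_
  rw [Real.norm_eq_abs]; exact (sq_abs _).symm

lemma mul_rowNorm_le {m n r : ℕ} (A : Matrix (Fin m) (Fin n) ℝ)
    (M : Matrix (Fin n) (Fin r) ℝ) (i : Fin m) :
    Real.sqrt (∑ l, ((A * M) i l) ^ 2) ≤
      ∑ k, |A i k| * Real.sqrt (∑ l, (M k l) ^ 2) := by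
  rw [rowNorm0]
  have h : (WithLp.equiv 2 (Fin r → ℝ)).symm ((A * M) i)
      = ∑ k, A i k • (WithLp.equiv 2 (Fin r → ℝ)).symm (M k) := by
    ext l
    rw [show (∑ k, A i k • (WithLp.equiv 2 (Fin r → ℝ)).symm (M k)) l
        = ∑ k, (A i k • (WithLp.equiv 2 (Fin r → ℝ)).symm (M k)) l from
        (congrFun (WithLp.ofLp_sum _ _ _ _) l).trans (Finset.sum_apply _ _ _)]
    simp [Matrix.mul_apply]
  rw [h]
  refine (norm_sum_le _ _).trans ?_
  refine Finset.sum_le_sum fun k _ => ?_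
  rw [norm_smul, Real.norm_eq_abs, rowNorm0]


lemma sparse_row_bound {m n r : ℕ} (A : Matrix (Fin m) (Fin n) ℝ)
    (M : Matrix (Fin n) (Fin r) ℝ) (i : Fin m) (s c B : ℝ)
    (hcard : ((Finset.univ.filter fun k => A i k ≠ 0).card : ℝ) ≤ s)
    (hc : ∀ k, |A i k| ≤ c) (hc0 : 0 ≤ c)
    (hB : ∀ k, rowNorm M k ≤ B) (hB0 : 0 ≤ B) :
    rowNorm (A * M) i ≤ s * (c * B) := by
  refine (mul_rowNorm_le A M i).trans ?_
  have h1 : ∑ k, |A i k| * Real.sqrt (∑ l, (M k l) ^ 2)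
      = ∑ k ∈ Finset.univ.filter fun k => A i k ≠ 0,
          |A i k| * Real.sqrt (∑ l, (M k l) ^ 2) := by
    refine (Finset.sum_filter_of_ne fun k _ hk => ?_).symm
    intro h0
    exact hk (by rw [h0, abs_zero, zero_mul])
  rw [h1]
  have h2 : ∑ k ∈ Finset.univ.filter fun k => A i k ≠ 0,
      |A i k| * Real.sqrt (∑ l, (M k l) ^ 2)
      ≤ ((Finset.univ.filter fun k => A i k ≠ 0).card : ℝ) * (c * B) := by
    calc ∑ k ∈ Finset.univ.filter fun k => A i k ≠ 0,
        |A i k| * Real.sqrt (∑ l, (M k l) ^ 2)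
        ≤ ∑ _k ∈ Finset.univ.filter fun k => A i k ≠ 0, c * B :=
          Finset.sum_le_sum fun k _ =>
            mul_le_mul (hc k) (hB k) (Real.sqrt_nonneg _) hc0
      _ = ((Finset.univ.filter fun k => A i k ≠ 0).card : ℝ) * (c * B) := by
          rw [Finset.sum_const, nsmul_eq_mul]
  exact h2.trans (mul_le_mul_of_nonneg_right hcard (mul_nonneg hc0 hB0))


theorem row_norm_pow_mul_incoherent_bound {n₁ n₂ r : ℕ} (α μ : ℝ)
    (E : Matrix (Fin n₁) (Fin n₂) ℝ) (V : Matrix (Fin n₂) (Fin r) ℝ)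
    (hE : IsAlphaSparse α E) (hV : IsIncoherent μ V) (p : ℕ) (j : Fin n₁) :
    rowNorm ((E * Eᵀ) ^ p * E * V) j ≤
      Real.sqrt (μ ^ 2 * r / n₁) * (α * Real.sqrt (n₁ * n₂) * entrySup E) ^ (2 * p + 1) := by
  rcases Nat.eq_zero_or_pos n₂ with h2 | h2
  · subst h2
    have hL : rowNorm ((E * Eᵀ) ^ p * E * V) j = 0 := by
      have : ∀ l, ((E * Eᵀ) ^ p * E * V) j l = 0 := by
        intro l
        rw [Matrix.mul_apply]
        exact Finset.sum_of_isEmpty _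
      simp [rowNorm, this]
    rw [hL]
    have : (α * Real.sqrt ((n₁ : ℝ) * (0 : ℕ)) * entrySup E) ^ (2 * p + 1) = 0 := by
      rw [show ((n₁ : ℝ) * ((0:ℕ) : ℝ)) = 0 by simp, Real.sqrt_zero, mul_zero, zero_mul,
        zero_pow (by omega)]
    rw [this, mul_zero]
  · -- main case
    set c := entrySup E with hcdef
    have hn₁ : 0 < n₁ := j.pos
    obtain ⟨k₀⟩ : Nonempty (Fin n₂) := ⟨⟨0, h2⟩⟩
    have hc : ∀ i k, |E i k| ≤ c := by
      intro i k
      have h1 : |E i k| ≤ ⨆ k', |E i k'| :=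
        le_ciSup (f := fun k' => |E i k'|) (Set.Finite.bddAbove (Set.finite_range _)) k
      have h2 : (⨆ k', |E i k'|) ≤ ⨆ i', ⨆ k', |E i' k'| :=
        le_ciSup (f := fun i' => ⨆ k', |E i' k'|) (Set.Finite.bddAbove (Set.finite_range _)) i
      exact h1.trans h2
    have hc0 : 0 ≤ c := (abs_nonneg _).trans (hc j k₀)
    have hα : 0 ≤ α := by
      have h := hE.1 k₀
      have : (0:ℝ) ≤ α * n₁ := le_trans (Nat.cast_nonneg _) h
      have hn : (0:ℝ) < n₁ := by exact_mod_cast hn₁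
      nlinarith
    set B₀ := μ * Real.sqrt r / Real.sqrt n₂ with hB₀def
    have hB₀0 : 0 ≤ B₀ := (Real.sqrt_nonneg _).trans (hV k₀)
    have hA2 : 0 ≤ α * (n₂:ℝ) * c := mul_nonneg (mul_nonneg hα (Nat.cast_nonneg _)) hc0
    have hA1 : 0 ≤ α * (n₁:ℝ) * c := mul_nonneg (mul_nonneg hα (Nat.cast_nonneg _)) hc0
    have key : ∀ q : ℕ, ∀ i : Fin n₁, rowNorm ((E * Eᵀ) ^ q * E * V) i ≤
        B₀ * (α * n₂ * c) ^ (q + 1) * (α * n₁ * c) ^ q := by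
      intro q
      induction q with
      | zero =>
        intro i
        rw [pow_zero, Matrix.one_mul, pow_one, pow_zero, mul_one]
        have := sparse_row_bound E V i (α * n₂) c B₀ (hE.2 i) (hc i) hc0 hV hB₀0
        calc rowNorm (E * V) i ≤ α * n₂ * (c * B₀) := this
          _ = B₀ * (α * n₂ * c) := by ring
      | succ q ih =>
        intro i
        have hrw : (E * Eᵀ) ^ (q + 1) * E * V = E * (Eᵀ * ((E * Eᵀ) ^ q * E * V)) := by
          rw [pow_succ']
          simp only [Matrix.mul_assoc]
        rw [hrw]
        have hBq : 0 ≤ B₀ * (α * n₂ * c) ^ (q + 1) * (α * n₁ * c) ^ q :=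
          mul_nonneg (mul_nonneg hB₀0 (pow_nonneg hA2 _)) (pow_nonneg hA1 _)
        have hinner : ∀ k, rowNorm (Eᵀ * ((E * Eᵀ) ^ q * E * V)) k ≤
            α * n₁ * (c * (B₀ * (α * n₂ * c) ^ (q + 1) * (α * n₁ * c) ^ q)) := by
          intro k
          refine sparse_row_bound Eᵀ _ k (α * n₁) c _ ?_ (fun i' => hc i' k) hc0 ih hBq
          exact hE.1 k
        have hIB : 0 ≤ α * n₁ * (c * (B₀ * (α * n₂ * c) ^ (q + 1) * (α * n₁ * c) ^ q)) :=
          mul_nonneg (mul_nonneg hα (Nat.cast_nonneg _)) (mul_nonneg hc0 hBq)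
        have houter := sparse_row_bound E _ i (α * n₂) c _ (hE.2 i) (hc i) hc0 hinner hIB
        calc rowNorm (E * (Eᵀ * ((E * Eᵀ) ^ q * E * V))) i
            ≤ α * n₂ * (c * (α * n₁ * (c * (B₀ * (α * n₂ * c) ^ (q + 1) * (α * n₁ * c) ^ q)))) :=
              houter
          _ = B₀ * (α * n₂ * c) ^ (q + 1 + 1) * (α * n₁ * c) ^ (q + 1) := by ring
    refine (key p j).trans ?_
    -- algebra to reach the stated RHS
    set s₁ := Real.sqrt n₁ with hs₁def
    set s₂ := Real.sqrt n₂ with hs₂def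
    have hn₁' : ((n₁:ℝ)) = s₁ ^ 2 := (Real.sq_sqrt (Nat.cast_nonneg _)).symm
    have hn₂' : ((n₂:ℝ)) = s₂ ^ 2 := (Real.sq_sqrt (Nat.cast_nonneg _)).symm
    have hs₁pos : 0 < s₁ := Real.sqrt_pos.mpr (by exact_mod_cast hn₁)
    have hs₂pos : 0 < s₂ := Real.sqrt_pos.mpr (by exact_mod_cast h2)
    have hsqrtmul : Real.sqrt ((n₁:ℝ) * n₂) = s₁ * s₂ := by
      rw [Real.sqrt_mul (Nat.cast_nonneg _)]
    have hsqrtμ : Real.sqrt (μ ^ 2 * r / n₁) = |μ| * Real.sqrt r / s₁ := by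
      rw [show μ ^ 2 * (r:ℝ) / n₁ = (|μ| * Real.sqrt r / s₁) ^ 2 by
        rw [div_pow, mul_pow, sq_abs, Real.sq_sqrt (Nat.cast_nonneg r), ← hn₁']]
      exact Real.sqrt_sq (by positivity)
    rw [hsqrtμ, hsqrtmul]
    have hpow : (α * (s₁ * s₂) * c) ^ (2 * p + 1)
        = ((α * n₂ * c) * (α * n₁ * c)) ^ p * (α * (s₁ * s₂) * c) := by
      rw [pow_succ, pow_mul]
      congr 2
      rw [hn₁', hn₂']; ring
    rw [hpow]
    have hK : 0 ≤ ((α * (n₂:ℝ) * c) * (α * n₁ * c)) ^ p := pow_nonneg (mul_nonneg hA2 hA1) _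
    have hL : B₀ * (α * n₂ * c) ^ (p + 1) * (α * n₁ * c) ^ p
        = μ * (Real.sqrt r * s₂ * α * c * ((α * n₂ * c) * (α * n₁ * c)) ^ p) := by
      rw [hB₀def, mul_pow, pow_succ]
      rw [hn₂']
      field_simp
      ring
    have hR : |μ| * Real.sqrt r / s₁ * (((α * n₂ * c) * (α * n₁ * c)) ^ p * (α * (s₁ * s₂) * c))
        = |μ| * (Real.sqrt r * s₂ * α * c * ((α * n₂ * c) * (α * n₁ * c)) ^ p) := by
      field_simp
    rw [hL, hR]
    refine mul_le_mul_of_nonneg_right (le_abs_self μ) ?_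
    exact mul_nonneg (mul_nonneg (mul_nonneg (mul_nonneg (Real.sqrt_nonneg _) hs₂pos.le) hα) hc0) hK
end

section
/- Let L, S ∈ ℝ^{m×n} with ‖L‖_∞ ≤ λ, and set Ŝ = Hard_λ(L + S), where Hard_λ is the entrywise hard-thresholding operator. Then: (a) the support of Ŝ is contained in the support of S, i.e., S_{jk} = 0 implies Ŝ_{jk} = 0; and (b) ‖Ŝ − S‖_∞ ≤ 2λ. -/
open Matrix Real

/-- Entrywise hard-thresholding operator. -/
noncomputable def hardThresh {m n : ℕ} (lam : ℝ) (X : Matrix (Fin m) (Fin n) ℝ) :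
    Matrix (Fin m) (Fin n) ℝ :=
  Matrix.of fun i j => if lam < |X i j| then X i j else 0

theorem hard_threshold_support_and_error {m n : ℕ} (lam : ℝ)
    (L S : Matrix (Fin m) (Fin n) ℝ) (hL : ∀ i j, |L i j| ≤ lam) :
    (∀ j k, S j k = 0 → hardThresh lam (L + S) j k = 0) ∧
    (∀ j k, |hardThresh lam (L + S) j k - S j k| ≤ 2 * lam) := by

  have key : ∀ j k, |hardThresh lam (L + S) j k - S j k| ≤ 2 * lam := by
    intro j k
    have hl := hL j k
    have hnn : 0 ≤ lam := le_trans (abs_nonneg _) hl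
    simp only [hardThresh, Matrix.of_apply, Matrix.add_apply]
    show |(if lam < |L j k + S j k| then L j k + S j k else 0) - S j k| ≤ 2 * lam
    split_ifs with h
    · have : L j k + S j k - S j k = L j k := by ring
      rw [this]; linarith
    · push_neg at h
      have : |(0 : ℝ) - S j k| = |S j k| := by simp
      rw [this]
      have : |S j k| = |L j k + S j k - L j k| := by ring_nf
      calc |S j k| = |(L j k + S j k) - L j k| := by ring_nf
        _ ≤ |L j k + S j k| + |L j k| := abs_sub _ _
        _ ≤ lam + lam := add_le_add h hl
        _ = 2 * lam := by ring
  refine ⟨fun j k hS => ?_, key⟩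
  simp only [hardThresh, Matrix.of_apply, Matrix.add_apply, hS, add_zero]
  rw [if_neg (not_lt.mpr (hL j k))]
end

section
/- Let A ∈ ℝ^{r×r} be symmetric positive semidefinite-compatible with ‖A‖_F ≤ 3/4 (so that I + A is positive definite). Then ‖I − (I + A)^{-1/2}‖_F ≤ (4/3)·‖A‖_F. -/
open Matrix Real

/-- Spectral (operator) norm of a matrix, via the Euclidean spaces. -/
noncomputable def spectralNorm' {m n : ℕ} (A : Matrix (Fin m) (Fin n) ℝ) : ℝ :=
  ‖LinearMap.toContinuousLinearMap (Matrix.toEuclideanLin A)‖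

section Aux
variable {r : ℕ}
noncomputable def eucSq (x : Fin r → ℝ) : ℝ := ∑ i, x i ^ 2
noncomputable def frobSq {m n : ℕ} (M : Matrix (Fin m) (Fin n) ℝ) : ℝ := ∑ i, ∑ j, M i j ^ 2
lemma eucSq_nonneg (x : Fin r → ℝ) : 0 ≤ eucSq x := Finset.sum_nonneg fun _ _ => sq_nonneg _
lemma frobSq_nonneg {m n : ℕ} (M : Matrix (Fin m) (Fin n) ℝ) : 0 ≤ frobSq M :=
  Finset.sum_nonneg fun _ _ => Finset.sum_nonneg fun _ _ => sq_nonneg _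
lemma eucSq_eq_dot (x : Fin r → ℝ) : eucSq x = x ⬝ᵥ x := by simp [eucSq, dotProduct, sq]
lemma mulVec_dot (M : Matrix (Fin r) (Fin r) ℝ) (x y : Fin r → ℝ) :
    (M *ᵥ x) ⬝ᵥ y = x ⬝ᵥ (Mᵀ *ᵥ y) := by
  rw [dotProduct_comm, dotProduct_mulVec, dotProduct_comm, mulVec_transpose]
lemma dot_sq_le (x y : Fin r → ℝ) : (x ⬝ᵥ y) ^ 2 ≤ eucSq x * eucSq y := by
  simpa [dotProduct, eucSq] using Finset.sum_mul_sq_le_sq_mul_sq Finset.univ x y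
lemma eucSq_mulVec_le (M : Matrix (Fin r) (Fin r) ℝ) (x : Fin r → ℝ) :
    eucSq (M *ᵥ x) ≤ frobSq M * eucSq x := by
  rw [frobSq, Finset.sum_mul]
  simp only [eucSq, mulVec, dotProduct]
  exact Finset.sum_le_sum fun i _ => Finset.sum_mul_sq_le_sq_mul_sq Finset.univ (fun j => M i j) x
lemma frobSq_mul_left_le {c : ℝ} (B M : Matrix (Fin r) (Fin r) ℝ)
    (h : ∀ x, eucSq (B *ᵥ x) ≤ c * eucSq x) : frobSq (B * M) ≤ c * frobSq M := by
  have h1 : frobSq (B * M) = ∑ j, eucSq (B *ᵥ fun k => M k j) := by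
    rw [frobSq, Finset.sum_comm]
    exact Finset.sum_congr rfl fun j _ => by simp [eucSq, mulVec, dotProduct, Matrix.mul_apply]
  have h2 : frobSq M = ∑ j, eucSq (fun k => M k j) := by rw [frobSq, Finset.sum_comm]; rfl
  rw [h1, h2, Finset.mul_sum]
  exact Finset.sum_le_sum fun j _ => h _
lemma frobSq_mul_right_le {c : ℝ} (C M : Matrix (Fin r) (Fin r) ℝ)
    (h : ∀ x, eucSq (Cᵀ *ᵥ x) ≤ c * eucSq x) : frobSq (M * C) ≤ c * frobSq M := by
  have h1 : frobSq (M * C) = ∑ i, eucSq (Cᵀ *ᵥ fun k => M i k) := by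
    refine Finset.sum_congr rfl fun i _ => ?_
    simp [eucSq, mulVec, dotProduct, Matrix.mul_apply, mul_comm]
  have h2 : frobSq M = ∑ i, eucSq (fun k => M i k) := rfl
  rw [h1, h2, Finset.mul_sum]
  exact Finset.sum_le_sum fun i _ => h _
end Aux

section SqrtAux
open scoped MatrixOrder
noncomputable def psdSqrt {r : ℕ} (S : Matrix (Fin r) (Fin r) ℝ) : Matrix (Fin r) (Fin r) ℝ :=
  CFC.sqrt S
lemma psdSqrt_mul_self {r : ℕ} {S : Matrix (Fin r) (Fin r) ℝ} (hS : S.PosSemidef) :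
    psdSqrt S * psdSqrt S = S := CFC.sqrt_mul_sqrt_self S hS.nonneg
lemma psdSqrt_posSemidef {r : ℕ} (S : Matrix (Fin r) (Fin r) ℝ) : (psdSqrt S).PosSemidef :=
  (CFC.sqrt_nonneg S).posSemidef
end SqrtAux

/-- For a symmetric `A` with `‖A‖_F ≤ 3/4` (so that `I + A` is positive definite),
if `S` is the (unique) positive-definite square root of `I + A`, then
`‖I − (I + A)^{-1/2}‖_F = ‖I − S⁻¹‖_F ≤ (4/3)‖A‖_F`. -/
theorem inv_sqrt_perturbation_frobenius {r : ℕ} (A : Matrix (Fin r) (Fin r) ℝ)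
    (hsym : Aᵀ = A) (hF : frobNorm A ≤ 3 / 4)
    (S : Matrix (Fin r) (Fin r) ℝ) (hS : S.PosDef) (hSsq : S * S = 1 + A) :
    frobNorm (1 - S⁻¹) ≤ (4 / 3) * frobNorm A := by
  -- basic symmetry and invertibility facts
  have hSsym : Sᵀ = S := by
    have := hS.isHermitian
    simpa [Matrix.IsHermitian, Matrix.conjTranspose_eq_transpose_of_trivial] using this
  have hdS : IsUnit S.det := hS.det_pos.ne'.isUnit
  have hS1pd : (S + 1).PosDef := hS.add_posSemidef Matrix.PosSemidef.one
  have hdS1 : IsUnit (S + 1).det := hS1pd.det_pos.ne'.isUnit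
  have hSSinv : S * S⁻¹ = 1 := Matrix.mul_nonsing_inv S hdS
  have hSinvS : S⁻¹ * S = 1 := Matrix.nonsing_inv_mul S hdS
  -- Frobenius bound on A as a number
  have hFA : frobSq A ≤ 9 / 16 := by
    have h0 : (0:ℝ) ≤ frobSq A := frobSq_nonneg A
    have : Real.sqrt (frobSq A) ≤ 3 / 4 := hF
    nlinarith [Real.sq_sqrt h0, Real.sqrt_nonneg (frobSq A)]
  -- quadratic-form bound for A
  have hAq : ∀ x : Fin r → ℝ, -(3/4) * eucSq x ≤ x ⬝ᵥ (A *ᵥ x) := by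
    intro x
    have h1 := dot_sq_le x (A *ᵥ x)
    have h2 := eucSq_mulVec_le A x
    have h3 := eucSq_nonneg x
    have h4 := eucSq_nonneg (A *ᵥ x)
    nlinarith [sq_nonneg (x ⬝ᵥ (A *ᵥ x) + (3/4) * eucSq x),
      mul_le_mul_of_nonneg_right hFA h3, mul_le_mul_of_nonneg_left h2 h3]
  -- ‖Sx‖² = ‖x‖² + ⟨x, Ax⟩ ≥ (1/4)‖x‖²
  have hSq : ∀ x : Fin r → ℝ, eucSq (S *ᵥ x) = eucSq x + x ⬝ᵥ (A *ᵥ x) := by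
    intro x
    rw [eucSq_eq_dot, mulVec_dot, hSsym, Matrix.mulVec_mulVec, hSsq, Matrix.add_mulVec,
      Matrix.one_mulVec, dotProduct_add, eucSq_eq_dot]
  have hSlow : ∀ x : Fin r → ℝ, (1/4) * eucSq x ≤ eucSq (S *ᵥ x) := by
    intro x
    have := hAq x
    rw [hSq x]; linarith
  -- ‖S⁻¹x‖² ≤ 4‖x‖²
  have hSinvBound : ∀ x : Fin r → ℝ, eucSq (S⁻¹ *ᵥ x) ≤ 4 * eucSq x := by
    intro x
    have h := hSlow (S⁻¹ *ᵥ x)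
    rw [Matrix.mulVec_mulVec, hSSinv, Matrix.one_mulVec] at h
    linarith
  -- the positive semidefinite square root R of S
  set R := psdSqrt S with hRdef
  have hRsq : R * R = S := psdSqrt_mul_self hS.posSemidef
  have hRsym : Rᵀ = R := by
    have := (psdSqrt_posSemidef S).isHermitian
    simpa [Matrix.IsHermitian, Matrix.conjTranspose_eq_transpose_of_trivial] using this
  have hdR : IsUnit R.det := by
    have hh : R.det * R.det = S.det := by rw [← Matrix.det_mul, hRsq]
    exact isUnit_of_mul_isUnit_left (hh ▸ hdS)
  have hRRinv : R * R⁻¹ = 1 := Matrix.mul_nonsing_inv R hdR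
  have hRinvT : (R⁻¹)ᵀ = R⁻¹ := by rw [Matrix.transpose_nonsing_inv, hRsym]
  have hSinvRR : R⁻¹ * R⁻¹ = S⁻¹ := by rw [← Matrix.mul_inv_rev, hRsq]
  -- ⟨x, S⁻¹ x⟩ ≤ 2 ‖x‖²
  have hdotSinv : ∀ x : Fin r → ℝ, x ⬝ᵥ (S⁻¹ *ᵥ x) ≤ 2 * eucSq x := by
    intro x
    have h1 := dot_sq_le x (S⁻¹ *ᵥ x)
    have h2 := hSinvBound x
    have h3 := eucSq_nonneg x
    have h4 := eucSq_nonneg (S⁻¹ *ᵥ x)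
    nlinarith [sq_nonneg (x ⬝ᵥ (S⁻¹ *ᵥ x) - 2 * eucSq x)]
  -- ⟨x, S x⟩ ≥ (1/2)‖x‖²
  have hSdotLow : ∀ x : Fin r → ℝ, (1/2) * eucSq x ≤ x ⬝ᵥ (S *ᵥ x) := by
    intro x
    have hRx : eucSq (R *ᵥ x) = x ⬝ᵥ (S *ᵥ x) := by
      rw [eucSq_eq_dot, mulVec_dot, hRsym, Matrix.mulVec_mulVec, hRsq]
    have hRix : eucSq (R⁻¹ *ᵥ x) = x ⬝ᵥ (S⁻¹ *ᵥ x) := by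
      rw [eucSq_eq_dot, mulVec_dot, hRinvT, Matrix.mulVec_mulVec, hSinvRR]
    have hid : (R *ᵥ x) ⬝ᵥ (R⁻¹ *ᵥ x) = eucSq x := by
      rw [mulVec_dot, hRsym, Matrix.mulVec_mulVec, hRRinv, Matrix.one_mulVec, eucSq_eq_dot]
    have hcs := dot_sq_le (R *ᵥ x) (R⁻¹ *ᵥ x)
    rw [hid, hRx, hRix] at hcs
    have h2 := hdotSinv x
    have h3 := eucSq_nonneg x
    have h5 : 0 ≤ x ⬝ᵥ (S *ᵥ x) := by
      rw [← hRx]; exact eucSq_nonneg _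
    rcases eq_or_lt_of_le h3 with h | h
    · rw [← h]; linarith
    · nlinarith
  -- ‖(S+1)x‖² ≥ (9/4)‖x‖²
  have hS1low : ∀ x : Fin r → ℝ, (9/4) * eucSq x ≤ eucSq ((S + 1) *ᵥ x) := by
    intro x
    have hexp : eucSq ((S + 1) *ᵥ x) = eucSq (S *ᵥ x) + 2 * (x ⬝ᵥ (S *ᵥ x)) + eucSq x := by
      have h1 : (S + 1) *ᵥ x = S *ᵥ x + x := by rw [Matrix.add_mulVec, Matrix.one_mulVec]
      rw [h1, eucSq_eq_dot, dotProduct_add, add_dotProduct, add_dotProduct,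
        dotProduct_comm (S *ᵥ x) x, ← eucSq_eq_dot, ← eucSq_eq_dot]
      ring
    rw [hexp]
    have := hSlow x
    have := hSdotLow x
    linarith
  -- ‖(S+1)⁻¹x‖² ≤ (4/9)‖x‖²
  have hS1invBound : ∀ x : Fin r → ℝ, eucSq ((S + 1)⁻¹ *ᵥ x) ≤ (4/9) * eucSq x := by
    intro x
    have h := hS1low ((S + 1)⁻¹ *ᵥ x)
    rw [Matrix.mulVec_mulVec, Matrix.mul_nonsing_inv _ hdS1, Matrix.one_mulVec] at h
    linarith
  -- algebraic identity : 1 - S⁻¹ = S⁻¹ * (A * (S+1)⁻¹)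
  have hA' : A = (S - 1) * (S + 1) := by
    have : (S - 1) * (S + 1) = S * S - 1 := by noncomm_ring
    rw [this, hSsq]; abel
  have hkey : 1 - S⁻¹ = S⁻¹ * (A * (S + 1)⁻¹) := by
    rw [hA', Matrix.mul_assoc (S - 1), Matrix.mul_nonsing_inv _ hdS1, Matrix.mul_one,
      Matrix.mul_sub, hSinvS, Matrix.mul_one]
  -- Frobenius bound
  have hfs1 : frobSq (A * (S + 1)⁻¹) ≤ (4/9) * frobSq A := by
    apply frobSq_mul_right_le
    intro x
    have ht : ((S + 1)⁻¹)ᵀ = (S + 1)⁻¹ := by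
      rw [Matrix.transpose_nonsing_inv, Matrix.transpose_add, hSsym, Matrix.transpose_one]
    rw [ht]
    exact hS1invBound x
  have hfs2 : frobSq (S⁻¹ * (A * (S + 1)⁻¹)) ≤ 4 * frobSq (A * (S + 1)⁻¹) :=
    frobSq_mul_left_le _ _ hSinvBound
  have hfinal : frobSq (1 - S⁻¹) ≤ (16/9) * frobSq A := by
    rw [hkey]
    calc frobSq (S⁻¹ * (A * (S + 1)⁻¹)) ≤ 4 * frobSq (A * (S + 1)⁻¹) := hfs2
      _ ≤ 4 * ((4/9) * frobSq A) := by
          have := hfs1; linarith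
      _ = (16/9) * frobSq A := by ring
  -- conclude
  have h1 : frobNorm (1 - S⁻¹) = Real.sqrt (frobSq (1 - S⁻¹)) := rfl
  have h2 : frobNorm A = Real.sqrt (frobSq A) := rfl
  rw [h1, h2]
  calc Real.sqrt (frobSq (1 - S⁻¹)) ≤ Real.sqrt ((16/9) * frobSq A) :=
        Real.sqrt_le_sqrt hfinal
    _ = (4/3) * Real.sqrt (frobSq A) := by
        rw [show (16/9 : ℝ) = (4/3)^2 by norm_num, Real.sqrt_mul (by positivity),
          Real.sqrt_sq (by norm_num : (0:ℝ) ≤ 4/3)]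
end
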